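/- On a probability space, let X be a random covariate taking values in a measurable space 𝒳, W a {0,1}-valued treatment indicator, and Y(0), Y(1) integrable real-valued potential outcomes with observed outcome Y = W·Y(1) + (1−W)·Y(0); assume the pair (Y(0), Y(1)) is conditionally independent of W given σ(X). Suppose μ₀, μ₁ : 𝒳 → ℝ are measurable functions such that μ₀(X) and μ₁(X) are versions of the conditional expectations E[Y(0) | σ(X)] and E[Y(1) | σ(X)], respectively, and let ẽ : 𝒳 → ℝ be any measurable function with η ≤ ẽ(x) ≤ 1 − η for all x ∈ 𝒳 and some η ∈ (0, 1/2) (ẽ need not be the true propensity). Then E[ μ₁(X) − μ₀(X) + W·(Y − μ₁(X)) / ẽ(X) − (1 − W)·(Y − μ₀(X)) / (1 − ẽ(X)) ] = E[Y(1) − Y(0)]. -/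

import Mathlib

open MeasureTheory ProbabilityTheory Filter

section Aux

variable {Ω : Type*} {m' : MeasurableSpace Ω} [mΩ : MeasurableSpace Ω]
  [StandardBorelSpace Ω] [Nonempty Ω]
  {μ : Measure Ω} [IsProbabilityMeasure μ]

set_option synthInstance.maxHeartbeats 1000000 in
set_option maxHeartbeats 1600000 in
/-- Under conditional independence of `ξ` and `W` given `m'`, the conditional expectation of
`ξ` restricted to an event of `W` factorizes. -/
theorem aipw_condExp_factor (hm' : m' ≤ mΩ)
    {ξ W : Ω → ℝ} (hξ : Measurable ξ) (hW : Measurable W) (hξi : Integrable ξ μ)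
    (hCI : CondIndepFun m' hm' ξ W μ) {B : Set ℝ} (hB : MeasurableSet B) :
    μ[(W ⁻¹' B).indicator ξ|m'] =ᵐ[μ] fun ω => (μ⟦W ⁻¹' B|m'⟧) ω * (μ[ξ|m']) ω := by
  set A : Set Ω := W ⁻¹' B with hAdef
  have hA : MeasurableSet A := hW hB
  have hindA : Integrable (A.indicator (fun _ => (1:ℝ))) μ := (integrable_const 1).indicator hA
  have hnn : 0 ≤ᵐ[μ] μ⟦A|m'⟧ :=
    condExp_nonneg (ae_of_all _ fun ω => Set.indicator_nonneg (fun _ _ => zero_le_one) ω)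
  have hle1 : μ⟦A|m'⟧ ≤ᵐ[μ] fun _ => (1:ℝ) := by
    have h := condExp_mono (m := m') hindA (integrable_const (1:ℝ))
      (ae_of_all _ fun ω => Set.indicator_le_self' (fun _ _ => zero_le_one) ω)
    rwa [condExp_const hm'] at h
  have habs : ∀ᵐ ω ∂μ, ‖(μ⟦A|m'⟧) ω‖ ≤ 1 := by
    filter_upwards [hnn, hle1] with ω h0 h1
    rw [Real.norm_eq_abs, abs_of_nonneg h0]; exact h1
  have hprodInt : ∀ w : Ω → ℝ, Integrable (fun ω => (μ⟦A|m'⟧) ω * (μ[w|m']) ω) μ := fun w =>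
    integrable_condExp.bdd_mul (stronglyMeasurable_condExp.mono hm').aestronglyMeasurable habs
  -- estimates
  have hestL : ∀ w : Ω → ℝ, Integrable w μ → ∀ t : Set Ω, MeasurableSet[m'] t →
      |∫ ω in t, A.indicator w ω ∂μ| ≤ ∫ ω, |w ω| ∂μ := by
    intro w hw t ht
    have hwind : Integrable (A.indicator w) μ := hw.indicator hA
    calc |∫ ω in t, A.indicator w ω ∂μ| ≤ ∫ ω in t, |A.indicator w ω| ∂μ := by
          simpa only [Real.norm_eq_abs] using
            norm_integral_le_integral_norm (μ := μ.restrict t) (A.indicator w)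
      _ ≤ ∫ ω, |A.indicator w ω| ∂μ :=
          setIntegral_le_integral hwind.abs (ae_of_all _ fun ω => abs_nonneg _)
      _ ≤ ∫ ω, |w ω| ∂μ := by
          refine integral_mono hwind.abs hw.abs fun ω => ?_
          by_cases h : ω ∈ A <;> simp [Set.indicator_apply, h, abs_nonneg]
  have hestR : ∀ w : Ω → ℝ, Integrable w μ → ∀ t : Set Ω, MeasurableSet[m'] t →
      |∫ ω in t, (μ⟦A|m'⟧) ω * (μ[w|m']) ω ∂μ| ≤ ∫ ω, |w ω| ∂μ := by
    intro w hw t ht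
    have hint := hprodInt w
    calc |∫ ω in t, (μ⟦A|m'⟧) ω * (μ[w|m']) ω ∂μ|
        ≤ ∫ ω in t, |(μ⟦A|m'⟧) ω * (μ[w|m']) ω| ∂μ := by
          simpa only [Real.norm_eq_abs] using
            norm_integral_le_integral_norm (μ := μ.restrict t)
              (fun ω => (μ⟦A|m'⟧) ω * (μ[w|m']) ω)
      _ ≤ ∫ ω, |(μ⟦A|m'⟧) ω * (μ[w|m']) ω| ∂μ :=
          setIntegral_le_integral hint.abs (ae_of_all _ fun ω => abs_nonneg _)
      _ ≤ ∫ ω, |(μ[w|m']) ω| ∂μ := by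
          refine integral_mono_ae hint.abs integrable_condExp.abs ?_
          filter_upwards [habs] with ω h
          rw [abs_mul]
          exact mul_le_of_le_one_left (abs_nonneg _) (by rwa [Real.norm_eq_abs] at h)
      _ ≤ ∫ ω, |w ω| ∂μ := integral_abs_condExp_le w
  -- setup for induction on the comap σ-algebra of ξ
  have hβ : MeasurableSpace.comap ξ Real.measurableSpace ≤ mΩ := hξ.comap_le
  have hξmβ : Measurable[MeasurableSpace.comap ξ Real.measurableSpace] ξ :=
    fun s hs => ⟨s, hs, rfl⟩
  have hξt : Integrable ξ (μ.trim hβ) := hξi.trim hβ hξmβ.stronglyMeasurable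
  have key : ∀ ⦃w : Ω → ℝ⦄, Integrable w (μ.trim hβ) →
      ∀ t : Set Ω, MeasurableSet[m'] t →
        ∫ ω in t, A.indicator w ω ∂μ = ∫ ω in t, (μ⟦A|m'⟧) ω * (μ[w|m']) ω ∂μ := by
    refine @Integrable.induction Ω ℝ (MeasurableSpace.comap ξ Real.measurableSpace) _ (μ.trim hβ)
      (fun w => ∀ t : Set Ω, MeasurableSet[m'] t →
        ∫ ω in t, A.indicator w ω ∂μ = ∫ ω in t, (μ⟦A|m'⟧) ω * (μ[w|m']) ω ∂μ)
      ?_ ?_ ?_ ?_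
    · -- indicators
      rintro c s hs -
      obtain ⟨C, hC, rfl⟩ := hs
      intro t ht
      set C' : Set Ω := ξ ⁻¹' C with hC'def
      have hC' : MeasurableSet C' := hξ hC
      have hCA : MeasurableSet (C' ∩ A) := hC'.inter hA
      have hprod : (μ⟦C' ∩ A|m'⟧) =ᵐ[μ] fun ω => (μ⟦C'|m'⟧) ω * (μ⟦A|m'⟧) ω :=
        (condIndepFun_iff_condExp_inter_preimage_eq_mul hξ hW).mp hCI C B hC hB
      have hLHS : ∫ ω in t, A.indicator (C'.indicator fun _ => c) ω ∂μ
          = c * ∫ ω in t, (μ⟦C'|m'⟧) ω * (μ⟦A|m'⟧) ω ∂μ := by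
        calc ∫ ω in t, A.indicator (C'.indicator fun _ => c) ω ∂μ
            = ∫ ω in t, c * (C' ∩ A).indicator (fun _ => (1:ℝ)) ω ∂μ := by
              refine integral_congr_ae (ae_of_all _ fun ω => ?_)
              by_cases h1 : ω ∈ A <;> by_cases h2 : ω ∈ C' <;>
                simp [Set.indicator_apply, h1, h2, Set.mem_inter_iff]
          _ = c * ∫ ω in t, (C' ∩ A).indicator (fun _ => (1:ℝ)) ω ∂μ := integral_const_mul _ _
          _ = c * ∫ ω in t, (μ⟦C' ∩ A|m'⟧) ω ∂μ := by
              rw [setIntegral_condExp hm' ((integrable_const (1:ℝ)).indicator hCA) ht]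
          _ = c * ∫ ω in t, (μ⟦C'|m'⟧) ω * (μ⟦A|m'⟧) ω ∂μ := by
              congr 1
              exact setIntegral_congr_ae (hm' t ht) (hprod.mono fun ω h _ => h)
      have hcond : μ[(C'.indicator fun _ => c)|m'] =ᵐ[μ] fun ω => c * (μ⟦C'|m'⟧) ω := by
        have he2 : (C'.indicator fun _ => c) = c • (C'.indicator fun _ => (1:ℝ)) := by
          funext ω; by_cases h2 : ω ∈ C' <;> simp [Set.indicator_apply, h2]
        rw [he2]
        exact (condExp_smul c _ m').trans (ae_of_all _ fun ω => by simp)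
      have hRHS : ∫ ω in t, (μ⟦A|m'⟧) ω * (μ[(C'.indicator fun _ => c)|m']) ω ∂μ
          = c * ∫ ω in t, (μ⟦C'|m'⟧) ω * (μ⟦A|m'⟧) ω ∂μ := by
        calc ∫ ω in t, (μ⟦A|m'⟧) ω * (μ[(C'.indicator fun _ => c)|m']) ω ∂μ
            = ∫ ω in t, c * ((μ⟦C'|m'⟧) ω * (μ⟦A|m'⟧) ω) ∂μ := by
              refine setIntegral_congr_ae (hm' t ht) (hcond.mono fun ω h _ => ?_)
              rw [h]; ring
          _ = c * ∫ ω in t, (μ⟦C'|m'⟧) ω * (μ⟦A|m'⟧) ω ∂μ := integral_const_mul _ _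
      rw [hLHS, hRHS]
    · -- additivity
      intro f g hdis hfI hgI hPf hPg t ht
      have hfμ : Integrable f μ := integrable_of_integrable_trim hβ hfI
      have hgμ : Integrable g μ := integrable_of_integrable_trim hβ hgI
      calc ∫ ω in t, A.indicator (f + g) ω ∂μ
          = ∫ ω in t, (A.indicator f ω + A.indicator g ω) ∂μ := by
            refine integral_congr_ae (ae_of_all _ fun ω => ?_)
            by_cases h : ω ∈ A <;> simp [Set.indicator_apply, h]
        _ = ∫ ω in t, A.indicator f ω ∂μ + ∫ ω in t, A.indicator g ω ∂μ :=
            integral_add (hfμ.indicator hA).integrableOn (hgμ.indicator hA).integrableOn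
        _ = ∫ ω in t, (μ⟦A|m'⟧) ω * (μ[f|m']) ω ∂μ
            + ∫ ω in t, (μ⟦A|m'⟧) ω * (μ[g|m']) ω ∂μ := by rw [hPf t ht, hPg t ht]
        _ = ∫ ω in t, ((μ⟦A|m'⟧) ω * (μ[f|m']) ω + (μ⟦A|m'⟧) ω * (μ[g|m']) ω) ∂μ :=
            (integral_add (hprodInt f).integrableOn (hprodInt g).integrableOn).symm
        _ = ∫ ω in t, (μ⟦A|m'⟧) ω * (μ[f + g|m']) ω ∂μ := by
            refine setIntegral_congr_ae (hm' t ht) ?_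
            filter_upwards [condExp_add (m := m') hfμ hgμ] with ω h _
            rw [h]; simp [Pi.add_apply]; ring
    · -- closedness in L¹
      refine IsSeqClosed.isClosed ?_
      intro fn f hfn hlim t ht
      have hfi : ∀ n, Integrable ((fn n : Ω → ℝ)) μ :=
        fun n => integrable_of_integrable_trim hβ (L1.integrable_coeFn (fn n))
      have hfI : Integrable ((f : Ω → ℝ)) μ := integrable_of_integrable_trim hβ (L1.integrable_coeFn f)
      set ε : ℕ → ℝ := fun n => ∫ ω, |(f : Ω → ℝ) ω - (fn n : Ω → ℝ) ω| ∂μ with hεdef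
      have hεt : Tendsto ε atTop (nhds 0) := by
        have h1 : Tendsto (fun n => dist (fn n) f) atTop (nhds 0) :=
          tendsto_iff_dist_tendsto_zero.mp hlim
        refine h1.congr fun n => ?_
        have hmeas : AEStronglyMeasurable[MeasurableSpace.comap ξ Real.measurableSpace] (fun a => |(f : Ω → ℝ) a - (fn n : Ω → ℝ) a|)
            (μ.trim hβ) := by
          have := ((Lp.aestronglyMeasurable f).sub (Lp.aestronglyMeasurable (fn n))).norm
          exact this.congr (ae_of_all _ fun a => by simp [Real.norm_eq_abs])
        calc dist (fn n) f
            = ∫ a, dist ((fn n : Ω → ℝ) a) ((f : Ω → ℝ) a) ∂(μ.trim hβ) :=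
              L1.dist_eq_integral_dist _ _
          _ = ∫ a, |(f : Ω → ℝ) a - (fn n : Ω → ℝ) a| ∂(μ.trim hβ) := by
              refine integral_congr_ae (ae_of_all _ fun a => ?_)
              simp only [Real.dist_eq, abs_sub_comm]
          _ = ε n := (integral_trim_ae hβ hmeas).symm
      set D : ℝ := ∫ ω in t, A.indicator (f : Ω → ℝ) ω ∂μ
        - ∫ ω in t, (μ⟦A|m'⟧) ω * (μ[(f : Ω → ℝ)|m']) ω ∂μ with hDdef
      have hbound : ∀ n, |D| ≤ 2 * ε n := by
        intro n
        have hPn := hfn n t ht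
        have hw : Integrable (fun ω => (f : Ω → ℝ) ω - (fn n : Ω → ℝ) ω) μ := hfI.sub (hfi n)
        have hw' : Integrable (fun ω => (fn n : Ω → ℝ) ω - (f : Ω → ℝ) ω) μ := (hfi n).sub hfI
        have eL : ∫ ω in t, A.indicator (f : Ω → ℝ) ω ∂μ
            - ∫ ω in t, A.indicator ((fn n : Ω → ℝ)) ω ∂μ
            = ∫ ω in t, A.indicator (fun ω => (f : Ω → ℝ) ω - (fn n : Ω → ℝ) ω) ω ∂μ := by
          rw [← integral_sub (hfI.indicator hA).integrableOn ((hfi n).indicator hA).integrableOn]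
          refine integral_congr_ae (ae_of_all _ fun ω => ?_)
          by_cases h : ω ∈ A <;> simp [Set.indicator_apply, h]
        have eR : ∫ ω in t, (μ⟦A|m'⟧) ω * (μ[(fn n : Ω → ℝ)|m']) ω ∂μ
            - ∫ ω in t, (μ⟦A|m'⟧) ω * (μ[(f : Ω → ℝ)|m']) ω ∂μ
            = ∫ ω in t, (μ⟦A|m'⟧) ω
              * (μ[fun ω => (fn n : Ω → ℝ) ω - (f : Ω → ℝ) ω|m']) ω ∂μ := by
          rw [← integral_sub (hprodInt _).integrableOn (hprodInt _).integrableOn]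
          refine setIntegral_congr_ae (hm' t ht) ?_
          filter_upwards [condExp_sub (m := m') (hfi n) hfI] with ω h _
          rw [show (fun ω => (fn n : Ω → ℝ) ω - (f : Ω → ℝ) ω)
            = ((fn n : Ω → ℝ) - (f : Ω → ℝ)) from rfl, h]
          simp [Pi.sub_apply]; ring
        have h1 : |∫ ω in t, A.indicator (fun ω => (f : Ω → ℝ) ω - (fn n : Ω → ℝ) ω) ω ∂μ|
            ≤ ε n := hestL _ hw t ht
        have h2 : |∫ ω in t, (μ⟦A|m'⟧) ω
            * (μ[fun ω => (fn n : Ω → ℝ) ω - (f : Ω → ℝ) ω|m']) ω ∂μ| ≤ ε n := by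
          have h := hestR _ hw' t ht
          have : ∫ ω, |(fn n : Ω → ℝ) ω - (f : Ω → ℝ) ω| ∂μ = ε n := by
            exact integral_congr_ae (ae_of_all _ fun ω => abs_sub_comm _ _)
          rwa [this] at h
        have hDeq : D = (∫ ω in t, A.indicator (fun ω => (f : Ω → ℝ) ω - (fn n : Ω → ℝ) ω) ω ∂μ)
            + (∫ ω in t, (μ⟦A|m'⟧) ω
              * (μ[fun ω => (fn n : Ω → ℝ) ω - (f : Ω → ℝ) ω|m']) ω ∂μ) := by
          rw [← eL, ← eR, hDdef, hPn]; ring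
        calc |D| ≤ _ + _ := hDeq ▸ abs_add_le _ _
          _ ≤ ε n + ε n := add_le_add h1 h2
          _ = 2 * ε n := by ring
      have h2ε : Tendsto (fun n => 2 * ε n) atTop (nhds 0) := by
        simpa using hεt.const_mul 2
      have hD0 : |D| ≤ 0 := ge_of_tendsto' h2ε hbound
      have : D = 0 := abs_eq_zero.mp (le_antisymm hD0 (abs_nonneg D))
      exact sub_eq_zero.mp this
    · -- a.e. invariance
      intro f g hfg hfi hPf t ht
      have hfgμ : f =ᵐ[μ] g := ae_eq_of_ae_eq_trim hfg
      calc ∫ ω in t, A.indicator g ω ∂μ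
          = ∫ ω in t, A.indicator f ω ∂μ := by
            refine setIntegral_congr_ae (hm' t ht) (hfgμ.mono fun ω h _ => ?_)
            by_cases hω : ω ∈ A <;> simp [Set.indicator_apply, hω, h]
        _ = ∫ ω in t, (μ⟦A|m'⟧) ω * (μ[f|m']) ω ∂μ := hPf t ht
        _ = ∫ ω in t, (μ⟦A|m'⟧) ω * (μ[g|m']) ω ∂μ := by
            refine setIntegral_congr_ae (hm' t ht) ?_
            filter_upwards [condExp_congr_ae (m := m') hfgμ] with ω h _
            rw [h]
  have hP := key hξt
  have hgm : AEStronglyMeasurable[m'] (fun ω => (μ⟦A|m'⟧) ω * (μ[ξ|m']) ω) μ :=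
    (stronglyMeasurable_condExp.mul stronglyMeasurable_condExp).aestronglyMeasurable
  exact (ae_eq_condExp_of_forall_setIntegral_eq hm' (hξi.indicator hA)
    (fun s hs _ => (hprodInt ξ).integrableOn)
    (fun s hs _ => (hP s hs).symm) hgm).symm

/-- Pull-out computation: replacing `ξ` by a version `mX` of its conditional expectation inside
the weighted indicator integral. -/
theorem aipw_integral_swap (hm' : m' ≤ mΩ)
    {A : Set Ω} (hA : MeasurableSet A) {ξ mX g : Ω → ℝ}
    (hξi : Integrable ξ μ) (hmXi : Integrable mX μ)
    (hmXm : StronglyMeasurable[m'] mX) (hgm : StronglyMeasurable[m'] g)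
    {C : ℝ} (hgb : ∀ ω, |g ω| ≤ C)
    (hfact : μ[A.indicator ξ|m'] =ᵐ[μ] fun ω => (μ⟦A|m'⟧) ω * (μ[ξ|m']) ω)
    (hver : μ[ξ|m'] =ᵐ[μ] mX) :
    ∫ ω, g ω * A.indicator ξ ω ∂μ = ∫ ω, g ω * A.indicator mX ω ∂μ := by
  have hgae : AEStronglyMeasurable g μ := (hgm.mono hm').aestronglyMeasurable
  have hgb' : ∀ᵐ ω ∂μ, ‖g ω‖ ≤ C := ae_of_all _ fun ω => by
    simpa [Real.norm_eq_abs] using hgb ω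
  have hind : Integrable (A.indicator ξ) μ := hξi.indicator hA
  have h1 : Integrable (g * A.indicator ξ) μ := hind.bdd_mul hgae hgb'
  have e1 : μ[g * A.indicator ξ|m'] =ᵐ[μ] g * μ[A.indicator ξ|m'] :=
    condExp_mul_of_stronglyMeasurable_left hgm h1 hind
  have hgmX : Integrable (g * mX) μ := hmXi.bdd_mul hgae hgb'
  have hgmXm : StronglyMeasurable[m'] (g * mX) := hgm.mul hmXm
  have hindA : Integrable (A.indicator fun _ => (1:ℝ)) μ := (integrable_const 1).indicator hA
  have h2 : Integrable ((g * mX) * A.indicator fun _ => (1:ℝ)) μ := by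
    have h3 : Integrable (A.indicator (g * mX)) μ := hgmX.indicator hA
    refine h3.congr (ae_of_all _ fun ω => ?_)
    by_cases h : ω ∈ A <;> simp [Set.indicator_apply, h]
  have e2 : μ[(g * mX) * A.indicator (fun _ => (1:ℝ))|m'] =ᵐ[μ] (g * mX) * μ⟦A|m'⟧ :=
    condExp_mul_of_stronglyMeasurable_left hgmXm h2 hindA
  calc ∫ ω, g ω * A.indicator ξ ω ∂μ
      = ∫ ω, (μ[g * A.indicator ξ|m']) ω ∂μ := (integral_condExp hm').symm
    _ = ∫ ω, g ω * (μ[A.indicator ξ|m']) ω ∂μ := integral_congr_ae e1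
    _ = ∫ ω, ((g * mX) * μ⟦A|m'⟧) ω ∂μ := by
        refine integral_congr_ae ?_
        filter_upwards [hfact, hver] with ω h h'
        simp only [Pi.mul_apply]
        rw [h, h']; ring
    _ = ∫ ω, (μ[(g * mX) * A.indicator (fun _ => (1:ℝ))|m']) ω ∂μ :=
        (integral_congr_ae e2).symm
    _ = ∫ ω, ((g * mX) * A.indicator (fun _ => (1:ℝ))) ω ∂μ := integral_condExp hm'
    _ = ∫ ω, g ω * A.indicator mX ω ∂μ := by
        refine integral_congr_ae (ae_of_all _ fun ω => ?_)
        by_cases h : ω ∈ A <;> simp [Set.indicator_apply, h]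

end Aux

/-- **Double robustness of AIPW, outcome side.** Under unconfoundedness, if
`m₀(X), m₁(X)` are versions of the true conditional means `E[Y(0)|σ(X)], E[Y(1)|σ(X)]`
and `ẽ : 𝒳 → ℝ` is any measurable function with η-overlap (not required to be the true
propensity), then the AIPW score is unbiased for the ATE:
`E[m₁(X) − m₀(X) + W(Y − m₁(X))/ẽ(X) − (1−W)(Y − m₀(X))/(1−ẽ(X))] = E[Y(1) − Y(0)]`. -/
theorem aipw_unbiased_when_outcome_models_correct
    {Ω : Type*} [MeasurableSpace Ω] [StandardBorelSpace Ω] [Nonempty Ω]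
    {𝒳 : Type*} [MeasurableSpace 𝒳]
    (μ : Measure Ω) [IsProbabilityMeasure μ]
    (X : Ω → 𝒳) (hX : Measurable X)
    (W : Ω → ℝ) (hWm : Measurable W) (hW01 : ∀ ω, W ω = 0 ∨ W ω = 1)
    (Y0 Y1 : Ω → ℝ) (hY0m : Measurable Y0) (hY1m : Measurable Y1)
    (hY0i : Integrable Y0 μ) (hY1i : Integrable Y1 μ)
    (Y : Ω → ℝ) (hY : ∀ ω, Y ω = W ω * Y1 ω + (1 - W ω) * Y0 ω)
    (hunconf : CondIndepFun (MeasurableSpace.comap X inferInstance) hX.comap_le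
      (fun ω => (Y0 ω, Y1 ω)) W μ)
    (m₀ m₁ : 𝒳 → ℝ) (hm₀ : Measurable m₀) (hm₁ : Measurable m₁)
    (hm₀v : μ[Y0 | MeasurableSpace.comap X inferInstance] =ᵐ[μ] fun ω => m₀ (X ω))
    (hm₁v : μ[Y1 | MeasurableSpace.comap X inferInstance] =ᵐ[μ] fun ω => m₁ (X ω))
    (etil : 𝒳 → ℝ) (hetil : Measurable etil)
    (η : ℝ) (hη0 : 0 < η) (hη : η < 1 / 2)
    (hovl : ∀ x, η ≤ etil x ∧ etil x ≤ 1 - η) :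
    ∫ ω, (m₁ (X ω) - m₀ (X ω) + W ω * (Y ω - m₁ (X ω)) / etil (X ω)
        - (1 - W ω) * (Y ω - m₀ (X ω)) / (1 - etil (X ω))) ∂μ
      = ∫ ω, (Y1 ω - Y0 ω) ∂μ := by
  have hm'le : MeasurableSpace.comap X inferInstance ≤ ‹MeasurableSpace Ω› := hX.comap_le
  have hXm' : Measurable[MeasurableSpace.comap X inferInstance] X := fun s hs => ⟨s, hs, rfl⟩
  -- outcome model functions
  have hm1Xi : Integrable (fun ω => m₁ (X ω)) μ := integrable_condExp.congr hm₁v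
  have hm0Xi : Integrable (fun ω => m₀ (X ω)) μ := integrable_condExp.congr hm₀v
  have hm1Xm : StronglyMeasurable[MeasurableSpace.comap X inferInstance] (fun ω => m₁ (X ω)) :=
    (hm₁.comp hXm').stronglyMeasurable
  have hm0Xm : StronglyMeasurable[MeasurableSpace.comap X inferInstance] (fun ω => m₀ (X ω)) :=
    (hm₀.comp hXm').stronglyMeasurable
  -- weights
  have hg1m : StronglyMeasurable[MeasurableSpace.comap X inferInstance] (fun ω => (etil (X ω))⁻¹) :=
    ((hetil.comp hXm').inv).stronglyMeasurable
  have hg0m : StronglyMeasurable[MeasurableSpace.comap X inferInstance] (fun ω => (1 - etil (X ω))⁻¹) :=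
    (((measurable_const (a := (1:ℝ))).sub (hetil.comp hXm')).inv).stronglyMeasurable
  have hg1b : ∀ ω, |(etil (X ω))⁻¹| ≤ η⁻¹ := by
    intro ω
    have h := hovl (X ω)
    have hpos : 0 < etil (X ω) := lt_of_lt_of_le hη0 h.1
    rw [abs_of_nonneg (inv_nonneg.mpr hpos.le)]
    have h2 := one_div_le_one_div_of_le hη0 h.1
    simpa [one_div] using h2
  have hg0b : ∀ ω, |(1 - etil (X ω))⁻¹| ≤ η⁻¹ := by
    intro ω
    have h := hovl (X ω)
    have hle : η ≤ 1 - etil (X ω) := by linarith [h.2]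
    have hpos : 0 < 1 - etil (X ω) := lt_of_lt_of_le hη0 hle
    rw [abs_of_nonneg (inv_nonneg.mpr hpos.le)]
    have := one_div_le_one_div_of_le hη0 hle
    simpa [one_div] using this
  -- treatment events
  set A1 : Set Ω := W ⁻¹' {(1:ℝ)} with hA1def
  set A0 : Set Ω := W ⁻¹' {(0:ℝ)} with hA0def
  have hA1 : MeasurableSet A1 := hWm (measurableSet_singleton 1)
  have hA0 : MeasurableSet A0 := hWm (measurableSet_singleton 0)
  -- conditional independence of components
  have hCI1 : CondIndepFun (MeasurableSpace.comap X inferInstance) hX.comap_le Y1 W μ :=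
    hunconf.comp measurable_snd measurable_id
  have hCI0 : CondIndepFun (MeasurableSpace.comap X inferInstance) hX.comap_le Y0 W μ :=
    hunconf.comp measurable_fst measurable_id
  have hfact1 := aipw_condExp_factor hX.comap_le hY1m hWm hY1i hCI1
    (measurableSet_singleton (1:ℝ))
  have hfact0 := aipw_condExp_factor hX.comap_le hY0m hWm hY0i hCI0
    (measurableSet_singleton (0:ℝ))
  have hswap1 := aipw_integral_swap (μ := μ) hX.comap_le hA1 hY1i hm1Xi hm1Xm hg1m hg1b
    hfact1 hm₁v
  have hswap0 := aipw_integral_swap (μ := μ) hX.comap_le hA0 hY0i hm0Xi hm0Xm hg0m hg0b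
    hfact0 hm₀v
  -- pointwise decomposition of the integrand
  have hpt : ∀ ω, m₁ (X ω) - m₀ (X ω) + W ω * (Y ω - m₁ (X ω)) / etil (X ω)
      - (1 - W ω) * (Y ω - m₀ (X ω)) / (1 - etil (X ω))
      = (m₁ (X ω) - m₀ (X ω))
        + ((etil (X ω))⁻¹ * A1.indicator Y1 ω
            - (etil (X ω))⁻¹ * A1.indicator (fun ω => m₁ (X ω)) ω)
        - ((1 - etil (X ω))⁻¹ * A0.indicator Y0 ω
            - (1 - etil (X ω))⁻¹ * A0.indicator (fun ω => m₀ (X ω)) ω) := by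
    intro ω
    rcases hW01 ω with h | h
    · have h1 : ω ∉ A1 := by simp [hA1def, Set.mem_preimage, h]
      have h0 : ω ∈ A0 := by simp [hA0def, Set.mem_preimage, h]
      have hYω : Y ω = Y0 ω := by rw [hY ω, h]; ring
      simp only [Set.indicator_of_notMem h1, Set.indicator_of_mem h0]
      rw [h, hYω, div_eq_mul_inv, div_eq_mul_inv]; ring
    · have h1 : ω ∈ A1 := by simp [hA1def, Set.mem_preimage, h]
      have h0 : ω ∉ A0 := by simp [hA0def, Set.mem_preimage, h]
      have hYω : Y ω = Y1 ω := by rw [hY ω, h]; ring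
      simp only [Set.indicator_of_mem h1, Set.indicator_of_notMem h0]
      rw [h, hYω, div_eq_mul_inv, div_eq_mul_inv]; ring
  -- integrability of all pieces
  have hg1ae : AEStronglyMeasurable (fun ω => (etil (X ω))⁻¹) μ :=
    (hg1m.mono hm'le).aestronglyMeasurable
  have hg0ae : AEStronglyMeasurable (fun ω => (1 - etil (X ω))⁻¹) μ :=
    (hg0m.mono hm'le).aestronglyMeasurable
  have hg1b' : ∀ᵐ ω ∂μ, ‖(etil (X ω))⁻¹‖ ≤ η⁻¹ :=
    ae_of_all _ fun ω => by rw [Real.norm_eq_abs]; exact hg1b ω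
  have hg0b' : ∀ᵐ ω ∂μ, ‖(1 - etil (X ω))⁻¹‖ ≤ η⁻¹ :=
    ae_of_all _ fun ω => by rw [Real.norm_eq_abs]; exact hg0b ω
  have hT1a : Integrable (fun ω => (etil (X ω))⁻¹ * A1.indicator Y1 ω) μ :=
    (hY1i.indicator hA1).bdd_mul hg1ae hg1b'
  have hT1b : Integrable (fun ω => (etil (X ω))⁻¹ * A1.indicator (fun ω => m₁ (X ω)) ω) μ :=
    (hm1Xi.indicator hA1).bdd_mul hg1ae hg1b'
  have hT0a : Integrable (fun ω => (1 - etil (X ω))⁻¹ * A0.indicator Y0 ω) μ :=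
    (hY0i.indicator hA0).bdd_mul hg0ae hg0b'
  have hT0b : Integrable (fun ω => (1 - etil (X ω))⁻¹ * A0.indicator (fun ω => m₀ (X ω)) ω) μ :=
    (hm0Xi.indicator hA0).bdd_mul hg0ae hg0b'
  have hbase : Integrable (fun ω => m₁ (X ω) - m₀ (X ω)) μ := hm1Xi.sub hm0Xi
  -- compute the integral
  calc ∫ ω, (m₁ (X ω) - m₀ (X ω) + W ω * (Y ω - m₁ (X ω)) / etil (X ω)
        - (1 - W ω) * (Y ω - m₀ (X ω)) / (1 - etil (X ω))) ∂μ
      = ∫ ω, ((m₁ (X ω) - m₀ (X ω))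
          + ((etil (X ω))⁻¹ * A1.indicator Y1 ω
              - (etil (X ω))⁻¹ * A1.indicator (fun ω => m₁ (X ω)) ω)
          - ((1 - etil (X ω))⁻¹ * A0.indicator Y0 ω
              - (1 - etil (X ω))⁻¹ * A0.indicator (fun ω => m₀ (X ω)) ω)) ∂μ :=
        integral_congr_ae (ae_of_all _ hpt)
    _ = ∫ ω, (m₁ (X ω) - m₀ (X ω)) ∂μ := by
        have hz1 : ∫ ω, ((etil (X ω))⁻¹ * A1.indicator Y1 ω
            - (etil (X ω))⁻¹ * A1.indicator (fun ω => m₁ (X ω)) ω) ∂μ = 0 := by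
          have h : ∫ ω, ((etil (X ω))⁻¹ * A1.indicator Y1 ω
              - (etil (X ω))⁻¹ * A1.indicator (fun ω => m₁ (X ω)) ω) ∂μ
              = (∫ ω, (etil (X ω))⁻¹ * A1.indicator Y1 ω ∂μ)
                - ∫ ω, (etil (X ω))⁻¹ * A1.indicator (fun ω => m₁ (X ω)) ω ∂μ :=
            integral_sub hT1a hT1b
          rw [h, hswap1, sub_self]
        have hz0 : ∫ ω, ((1 - etil (X ω))⁻¹ * A0.indicator Y0 ω
            - (1 - etil (X ω))⁻¹ * A0.indicator (fun ω => m₀ (X ω)) ω) ∂μ = 0 := by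
          have h : ∫ ω, ((1 - etil (X ω))⁻¹ * A0.indicator Y0 ω
              - (1 - etil (X ω))⁻¹ * A0.indicator (fun ω => m₀ (X ω)) ω) ∂μ
              = (∫ ω, (1 - etil (X ω))⁻¹ * A0.indicator Y0 ω ∂μ)
                - ∫ ω, (1 - etil (X ω))⁻¹ * A0.indicator (fun ω => m₀ (X ω)) ω ∂μ :=
            integral_sub hT0a hT0b
          rw [h, hswap0, sub_self]
        have hs1 : ∫ ω, ((m₁ (X ω) - m₀ (X ω))
            + ((etil (X ω))⁻¹ * A1.indicator Y1 ω
                - (etil (X ω))⁻¹ * A1.indicator (fun ω => m₁ (X ω)) ω)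
            - ((1 - etil (X ω))⁻¹ * A0.indicator Y0 ω
                - (1 - etil (X ω))⁻¹ * A0.indicator (fun ω => m₀ (X ω)) ω)) ∂μ
            = (∫ ω, ((m₁ (X ω) - m₀ (X ω))
                + ((etil (X ω))⁻¹ * A1.indicator Y1 ω
                  - (etil (X ω))⁻¹ * A1.indicator (fun ω => m₁ (X ω)) ω)) ∂μ)
              - ∫ ω, ((1 - etil (X ω))⁻¹ * A0.indicator Y0 ω
                  - (1 - etil (X ω))⁻¹ * A0.indicator (fun ω => m₀ (X ω)) ω) ∂μ :=
          integral_sub (hbase.add (hT1a.sub hT1b)) (hT0a.sub hT0b)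
        have hs2 : ∫ ω, ((m₁ (X ω) - m₀ (X ω))
              + ((etil (X ω))⁻¹ * A1.indicator Y1 ω
                - (etil (X ω))⁻¹ * A1.indicator (fun ω => m₁ (X ω)) ω)) ∂μ
            = (∫ ω, (m₁ (X ω) - m₀ (X ω)) ∂μ)
              + ∫ ω, ((etil (X ω))⁻¹ * A1.indicator Y1 ω
                - (etil (X ω))⁻¹ * A1.indicator (fun ω => m₁ (X ω)) ω) ∂μ :=
          integral_add hbase (hT1a.sub hT1b)
        rw [hs1, hs2, hz1, hz0, add_zero, sub_zero]
    _ = (∫ ω, m₁ (X ω) ∂μ) - ∫ ω, m₀ (X ω) ∂μ := integral_sub hm1Xi hm0Xi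
    _ = (∫ ω, Y1 ω ∂μ) - ∫ ω, Y0 ω ∂μ := by
        rw [← integral_congr_ae hm₁v, ← integral_congr_ae hm₀v,
          integral_condExp hm'le, integral_condExp hm'le]
    _ = ∫ ω, (Y1 ω - Y0 ω) ∂μ := (integral_sub hY1i hY0i).symm
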